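/- Let d, e be nonzero integers and δ₁, δ₂ ∈ [0,1/2), and y₁, y₂ ∈ ℝ. Define A(d,δ₁) = {x ∈ [0,1) : ∃p ∈ ℤ, |dx - p - y₁| < δ₁} and A(e,δ₂) = {x ∈ [0,1) : ∃s ∈ ℤ, |ex - s - y₂| < δ₂}. Then |A(d,δ₁) ∩ A(e,δ₂)| ≤ C(δ₁δ₂ + δ₁·gcd(d,e)/|d|) for an absolute constant C. -/

import Mathlib

open MeasureTheory Set
open scoped ENNReal

set_option maxHeartbeats 1000000

private lemma vol_band (a c δ : ℝ) (ha : a ≠ 0) :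
    volume {x : ℝ | |a * x - c| < δ} ≤ ENNReal.ofReal (2 * δ / |a|) := by
  rcases lt_or_gt_of_ne ha with h | h
  · have hset : {x : ℝ | |a * x - c| < δ} = Set.Ioo ((c + δ) / a) ((c - δ) / a) := by
      ext x
      simp only [Set.mem_setOf_eq, Set.mem_Ioo, abs_lt]
      rw [div_lt_iff_of_neg h, lt_div_iff_of_neg h]
      constructor <;> rintro ⟨h1, h2⟩ <;> constructor <;> nlinarith
    rw [hset, Real.volume_Ioo]
    apply ENNReal.ofReal_le_ofReal
    rw [abs_of_neg h]
    have : (c - δ) / a - (c + δ) / a = 2 * δ / -a := by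
      rw [div_sub_div_same, show c - δ - (c + δ) = -(2*δ) by ring, neg_div, ← div_neg]
    rw [this]
  · have hset : {x : ℝ | |a * x - c| < δ} = Set.Ioo ((c - δ) / a) ((c + δ) / a) := by
      ext x
      simp only [Set.mem_setOf_eq, Set.mem_Ioo, abs_lt]
      rw [div_lt_iff₀ h, lt_div_iff₀ h]
      constructor <;> rintro ⟨h1, h2⟩ <;> constructor <;> nlinarith
    rw [hset, Real.volume_Ioo]
    apply ENNReal.ofReal_le_ofReal
    rw [abs_of_pos h]
    have : (c + δ) / a - (c - δ) / a = 2 * δ / a := by ring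
    rw [this]

private lemma card_Icc_nat_le (lo hi : ℝ) (n : ℕ) (h : hi - lo ≤ n) :
    (Finset.Icc ⌈lo⌉ ⌊hi⌋).card ≤ n + 1 := by
  rw [Int.card_Icc]
  have h1 : (⌊hi⌋ : ℝ) ≤ hi := Int.floor_le hi
  have h2 : lo ≤ (⌈lo⌉ : ℝ) := Int.le_ceil lo
  have : ⌊hi⌋ + 1 - ⌈lo⌉ ≤ (n : ℤ) + 1 := by
    have : (⌊hi⌋ : ℝ) ≤ (⌈lo⌉ : ℝ) + n := by linarith
    have := (by exact_mod_cast this : ⌊hi⌋ ≤ ⌈lo⌉ + (n:ℤ))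
    omega
  omega

private lemma card_Icc_real_le (lo hi : ℝ) (h : lo ≤ hi) :
    ((Finset.Icc ⌈lo⌉ ⌊hi⌋).card : ℝ) ≤ hi - lo + 1 := by
  rw [Int.card_Icc]
  rcases le_or_gt (⌊hi⌋ + 1 - ⌈lo⌉) 0 with hle | hlt
  · rw [Int.toNat_of_nonpos hle]
    push_cast
    linarith
  · have h1 : (⌊hi⌋ : ℝ) ≤ hi := Int.floor_le hi
    have h2 : lo ≤ (⌈lo⌉ : ℝ) := Int.le_ceil lo
    have : ((⌊hi⌋ + 1 - ⌈lo⌉).toNat : ℝ) = ((⌊hi⌋ : ℝ) + 1 - ⌈lo⌉) := by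
      rw [← Int.cast_natCast, Int.toNat_of_nonneg (by omega)]
      push_cast; ring
    rw [this]
    linarith

theorem stmt18 :
    ∃ C : ℝ, 0 < C ∧
      ∀ (d e : ℤ), d ≠ 0 → e ≠ 0 →
      ∀ (δ₁ δ₂ : ℝ), 0 ≤ δ₁ → δ₁ < 1/2 → 0 ≤ δ₂ → δ₂ < 1/2 →
      ∀ (y₁ y₂ : ℝ),
        volume ({x : ℝ | x ∈ Set.Ico (0:ℝ) 1 ∧ ∃ p : ℤ, |(d : ℝ) * x - p - y₁| < δ₁} ∩
            {x : ℝ | x ∈ Set.Ico (0:ℝ) 1 ∧ ∃ s : ℤ, |(e : ℝ) * x - s - y₂| < δ₂}) ≤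
          ENNReal.ofReal (C * (δ₁ * δ₂ + δ₁ * (Int.gcd d e : ℝ) / |(d : ℝ)|)) := by
  refine ⟨40, by norm_num, ?_⟩
  intro d e hd0 he0 δ₁ δ₂ hδ₁0 hδ₁ hδ₂0 hδ₂ y₁ y₂
  set G : ℕ := Int.gcd d e with hG
  have hGpos : 0 < G := Int.gcd_pos_iff.mpr (Or.inl hd0)
  have hgR : (0:ℝ) < (G:ℝ) := by exact_mod_cast hGpos
  have hg0 : (G:ℝ) ≠ 0 := hgR.ne'
  have hG1 : (1:ℝ) ≤ (G:ℝ) := by exact_mod_cast hGpos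
  set d' : ℤ := d / (G : ℤ) with hd'
  set e' : ℤ := e / (G : ℤ) with he'
  have hdd : (G : ℤ) * d' = d := Int.mul_ediv_cancel' (Int.gcd_dvd_left d e)
  have hee : (G : ℤ) * e' = e := Int.mul_ediv_cancel' (Int.gcd_dvd_right d e)
  have hd'0 : d' ≠ 0 := by
    intro h; apply hd0; rw [← hdd, h, mul_zero]
  have hcop : IsCoprime d' e' :=
    Int.isCoprime_iff_gcd_eq_one.mpr (Int.gcd_div_gcd_div_gcd (by exact_mod_cast hGpos))
  have habsd : (0:ℝ) < |(d:ℝ)| := abs_pos.mpr (by exact_mod_cast hd0)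
  have habse : (0:ℝ) < |(e:ℝ)| := abs_pos.mpr (by exact_mod_cast he0)
  have habsd' : (1:ℝ) ≤ |(d':ℝ)| := by exact_mod_cast Int.one_le_abs hd'0
  have habsdd : |(d:ℝ)| = (G:ℝ) * |(d':ℝ)| := by
    rw [← hdd]; push_cast; rw [abs_mul, abs_of_pos hgR]
  set v : ℤ := Int.gcdB d e with hv
  set u : ℤ := Int.gcdA d e with hu
  have hbez : ((G:ℕ) : ℤ) = d * u + e * v := Int.gcd_eq_gcd_ab d e
  set R : ℝ := |(e:ℝ)| * δ₁ + |(d:ℝ)| * δ₂ with hR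
  have hR0 : 0 ≤ R := by positivity
  set c : ℝ := (e:ℝ) * y₁ - (d:ℝ) * y₂ with hc
  set K : Finset ℤ := Finset.Icc ⌈(c - R)/(G:ℝ)⌉ ⌊(c + R)/(G:ℝ)⌋ with hK
  set p₀ : ℤ → ℤ := fun k => -(k * v) with hp₀
  set q : ℤ → ℝ := fun k => -(((p₀ k : ℝ) + y₁)/(d' : ℝ)) with hq
  set T : ℤ → Finset ℤ := fun k => Finset.Icc ⌈q k - ((G:ℝ)+1)⌉ ⌊q k + ((G:ℝ)+1)⌋ with hT
  set E : ℤ → ℤ → Set ℝ := fun k t =>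
    {x : ℝ | |(d:ℝ) * x - (((p₀ k + d' * t : ℤ) : ℝ) + y₁)| < δ₁} ∩
    {x : ℝ | |(e:ℝ) * x - ((((G:ℤ) * k + e * (p₀ k + d' * t) : ℤ) : ℝ)/(d:ℝ) + y₂)| < δ₂}
    with hE
  -- covering
  have hcover : ({x : ℝ | x ∈ Set.Ico (0:ℝ) 1 ∧ ∃ p : ℤ, |(d : ℝ) * x - p - y₁| < δ₁} ∩
      {x : ℝ | x ∈ Set.Ico (0:ℝ) 1 ∧ ∃ s : ℤ, |(e : ℝ) * x - s - y₂| < δ₂}) ⊆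
      ⋃ k ∈ K, ⋃ t ∈ T k, E k t := by
    rintro x ⟨⟨hx01, p, hp⟩, ⟨-, s, hs⟩⟩
    have hx0 : (0:ℝ) ≤ x := hx01.1
    have hx1 : x < 1 := hx01.2
    set n : ℤ := d * s - e * p with hn
    have hgn : (G : ℤ) ∣ n := by
      rw [hn]
      exact dvd_sub (Dvd.dvd.mul_right (Int.gcd_dvd_left d e) s)
        (Dvd.dvd.mul_right (Int.gcd_dvd_right d e) p)
    set k : ℤ := n / (G : ℤ) with hk
    have hgk : (G : ℤ) * k = n := Int.mul_ediv_cancel' hgn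
    have hgkR : (G:ℝ) * (k:ℝ) = (n:ℝ) := by exact_mod_cast congrArg (fun z : ℤ => (z:ℝ)) hgk
    have hnc : |(n:ℝ) - c| ≤ R := by
      have hid : (n:ℝ) - c = (e:ℝ) * ((d:ℝ) * x - p - y₁) - (d:ℝ) * ((e:ℝ) * x - s - y₂) := by
        rw [hn, hc]; push_cast; ring
      rw [hid]
      calc |(e:ℝ) * ((d:ℝ) * x - p - y₁) - (d:ℝ) * ((e:ℝ) * x - s - y₂)|
          ≤ |(e:ℝ) * ((d:ℝ) * x - p - y₁)| + |(d:ℝ) * ((e:ℝ) * x - s - y₂)| := abs_sub _ _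
        _ ≤ |(e:ℝ)| * δ₁ + |(d:ℝ)| * δ₂ := by
            rw [abs_mul, abs_mul]
            exact add_le_add (mul_le_mul_of_nonneg_left hp.le (abs_nonneg _))
              (mul_le_mul_of_nonneg_left hs.le (abs_nonneg _))
    have hkK : k ∈ K := by
      rw [hK, Finset.mem_Icc]
      rw [abs_le] at hnc
      constructor
      · rw [Int.ceil_le, div_le_iff₀ hgR]
        nlinarith [hnc.1, hgkR]
      · rw [Int.le_floor, le_div_iff₀ hgR]
        nlinarith [hnc.2, hgkR]
    have h1 : e * p + (G:ℤ) * k = d * s := by rw [hgk, hn]; ring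
    have h2 : e * (p - p₀ k) = d * (s - k * u) := by
      have hp0 : p₀ k = -(k * v) := rfl
      rw [hp0]
      linear_combination h1 - k * hbez
    have hdvd : d' ∣ p - p₀ k := by
      have hdvd1 : d ∣ e * (p - p₀ k) := ⟨s - k * u, h2⟩
      have hdvd2 : (G:ℤ) * d' ∣ (G:ℤ) * (e' * (p - p₀ k)) := by
        rw [hdd, ← mul_assoc, hee]; exact hdvd1
      exact hcop.dvd_of_dvd_mul_left
        ((mul_dvd_mul_iff_left (by exact_mod_cast hGpos.ne' : (G:ℤ) ≠ 0)).mp hdvd2)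
    set t : ℤ := (p - p₀ k) / d' with htdef
    have htp : p₀ k + d' * t = p := by
      have h := Int.mul_ediv_cancel' hdvd
      linarith [h]
    have hpy : |(p:ℝ) + y₁| ≤ |(d:ℝ)| + 1 := by
      have hdx : |(d:ℝ) * x| ≤ |(d:ℝ)| := by
        rw [abs_mul]
        calc |(d:ℝ)| * |x| ≤ |(d:ℝ)| * 1 := by
              apply mul_le_mul_of_nonneg_left _ (abs_nonneg _)
              rw [abs_le]; constructor <;> linarith
          _ = |(d:ℝ)| := mul_one _
      have hidp : (p:ℝ) + y₁ = (d:ℝ) * x - ((d:ℝ) * x - p - y₁) := by ring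
      rw [hidp]
      calc |(d:ℝ) * x - ((d:ℝ) * x - p - y₁)|
          ≤ |(d:ℝ) * x| + |(d:ℝ) * x - p - y₁| := abs_sub _ _
        _ ≤ |(d:ℝ)| + 1 := by
            have := hp.le
            linarith
    have htT : t ∈ T k := by
      have hd't : ((d':ℤ) : ℝ) * (t:ℝ) = (p:ℝ) - ((p₀ k : ℤ):ℝ) := by
        have : d' * t = p - p₀ k := by omega
        exact_mod_cast congrArg (fun z : ℤ => (z:ℝ)) this
      have hd'R : ((d':ℤ):ℝ) ≠ 0 := by exact_mod_cast hd'0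
      have hid : (t:ℝ) - q k = ((p:ℝ) + y₁)/((d':ℤ):ℝ) := by
        rw [hq]
        simp only []
        field_simp
        linarith [hd't]
      have habs : |(t:ℝ) - q k| ≤ (G:ℝ) + 1 := by
        rw [hid, abs_div]
        rw [div_le_iff₀ (by linarith : (0:ℝ) < |((d':ℤ):ℝ)|)]
        calc |(p:ℝ) + y₁| ≤ |(d:ℝ)| + 1 := hpy
          _ ≤ ((G:ℝ) + 1) * |((d':ℤ):ℝ)| := by rw [habsdd]; nlinarith
      rw [hT]
      simp only [Finset.mem_Icc]
      rw [abs_le] at habs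
      constructor
      · rw [Int.ceil_le]; push_cast; linarith [habs.1]
      · rw [Int.le_floor]; push_cast; linarith [habs.2]
    refine Set.mem_iUnion₂.mpr ⟨k, hkK, Set.mem_iUnion₂.mpr ⟨t, htT, ?_⟩⟩
    rw [hE]
    constructor
    · show |(d:ℝ) * x - (((p₀ k + d' * t : ℤ) : ℝ) + y₁)| < δ₁
      rw [htp]
      have : (d:ℝ) * x - ((p:ℝ) + y₁) = (d:ℝ) * x - p - y₁ := by ring
      rw [this]; exact hp
    · show |(e:ℝ) * x - ((((G:ℤ) * k + e * (p₀ k + d' * t) : ℤ) : ℝ)/(d:ℝ) + y₂)| < δ₂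
      have hint : (G:ℤ) * k + e * (p₀ k + d' * t) = d * s := by
        rw [htp]; linear_combination h1
      rw [hint]
      have hdR : (d:ℝ) ≠ 0 := by exact_mod_cast hd0
      have : ((d * s : ℤ):ℝ)/(d:ℝ) = (s:ℝ) := by push_cast; field_simp
      rw [this]
      have : (e:ℝ) * x - ((s:ℝ) + y₂) = (e:ℝ) * x - s - y₂ := by ring
      rw [this]; exact hs
  -- volume bounds
  set M : ℝ := min (2*δ₁/|(d:ℝ)|) (2*δ₂/|(e:ℝ)|) with hM
  have hM0 : 0 ≤ M := le_min (by positivity) (by positivity)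
  have hm1 : M ≤ 2*δ₁/|(d:ℝ)| := min_le_left _ _
  have hm2 : M ≤ 2*δ₂/|(e:ℝ)| := min_le_right _ _
  have hdR : (d:ℝ) ≠ 0 := by exact_mod_cast hd0
  have heR : (e:ℝ) ≠ 0 := by exact_mod_cast he0
  have hEvol : ∀ k t, volume (E k t) ≤ ENNReal.ofReal M := by
    intro k t
    rcases min_cases (2*δ₁/|(d:ℝ)|) (2*δ₂/|(e:ℝ)|) with ⟨hmeq, -⟩ | ⟨hmeq, -⟩
    · rw [hM, hmeq]
      calc volume (E k t)
          ≤ volume {x : ℝ | |(d:ℝ) * x - (((p₀ k + d' * t : ℤ) : ℝ) + y₁)| < δ₁} :=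
            measure_mono Set.inter_subset_left
        _ ≤ ENNReal.ofReal (2*δ₁/|(d:ℝ)|) := vol_band _ _ _ hdR
    · rw [hM, hmeq]
      calc volume (E k t)
          ≤ volume {x : ℝ | |(e:ℝ) * x -
              ((((G:ℤ) * k + e * (p₀ k + d' * t) : ℤ) : ℝ)/(d:ℝ) + y₂)| < δ₂} :=
            measure_mono Set.inter_subset_right
        _ ≤ ENNReal.ofReal (2*δ₂/|(e:ℝ)|) := vol_band _ _ _ heR
  have hTcard : ∀ k, (T k).card ≤ 2*G + 3 := by
    intro k
    have h := card_Icc_nat_le (q k - ((G:ℝ)+1)) (q k + ((G:ℝ)+1)) (2*G+2) (by push_cast; linarith)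
    calc (T k).card = (Finset.Icc ⌈q k - ((G:ℝ)+1)⌉ ⌊q k + ((G:ℝ)+1)⌋).card := by rw [hT]
      _ ≤ 2*G+2+1 := h
      _ = 2*G+3 := by omega
  have hKcard : (K.card : ℝ) ≤ 2*R/(G:ℝ) + 1 := by
    have hle : (c - R)/(G:ℝ) ≤ (c + R)/(G:ℝ) := by
      gcongr
      linarith
    have h := card_Icc_real_le ((c - R)/(G:ℝ)) ((c + R)/(G:ℝ)) hle
    have heq : (c + R)/(G:ℝ) - (c - R)/(G:ℝ) = 2*R/(G:ℝ) := by
      rw [div_sub_div_same, show c + R - (c - R) = 2*R by ring]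
    rw [hK]
    rw [heq] at h
    exact h
  -- put it together
  have hmain : volume ({x : ℝ | x ∈ Set.Ico (0:ℝ) 1 ∧ ∃ p : ℤ, |(d : ℝ) * x - p - y₁| < δ₁} ∩
      {x : ℝ | x ∈ Set.Ico (0:ℝ) 1 ∧ ∃ s : ℤ, |(e : ℝ) * x - s - y₂| < δ₂}) ≤
      (K.card : ℝ≥0∞) * (((2*G+3 : ℕ) : ℝ≥0∞) * ENNReal.ofReal M) := by
    calc volume _ ≤ volume (⋃ k ∈ K, ⋃ t ∈ T k, E k t) := measure_mono hcover
      _ ≤ ∑ k ∈ K, volume (⋃ t ∈ T k, E k t) := measure_biUnion_finset_le K _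
      _ ≤ ∑ k ∈ K, ∑ t ∈ T k, volume (E k t) :=
          Finset.sum_le_sum (fun k _ => measure_biUnion_finset_le _ _)
      _ ≤ ∑ k ∈ K, ∑ t ∈ T k, ENNReal.ofReal M :=
          Finset.sum_le_sum (fun k _ => Finset.sum_le_sum (fun t _ => hEvol k t))
      _ = ∑ k ∈ K, ((T k).card : ℝ≥0∞) * ENNReal.ofReal M := by
          simp [Finset.sum_const, nsmul_eq_mul]
      _ ≤ ∑ k ∈ K, ((2*G+3 : ℕ) : ℝ≥0∞) * ENNReal.ofReal M := by
          apply Finset.sum_le_sum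
          intro k _
          gcongr
          exact_mod_cast hTcard k
      _ = (K.card : ℝ≥0∞) * (((2*G+3 : ℕ) : ℝ≥0∞) * ENNReal.ofReal M) := by
          rw [Finset.sum_const, nsmul_eq_mul]
  have hconv : (K.card : ℝ≥0∞) * (((2*G+3 : ℕ) : ℝ≥0∞) * ENNReal.ofReal M)
      = ENNReal.ofReal ((K.card : ℝ) * (((2*G+3 : ℕ) : ℝ) * M)) := by
    rw [ENNReal.ofReal_mul (by positivity), ENNReal.ofReal_mul (by positivity),
      ENNReal.ofReal_natCast, ENNReal.ofReal_natCast]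
  refine hmain.trans ?_
  rw [hconv]
  apply ENNReal.ofReal_le_ofReal
  -- final real arithmetic
  have hMe : |(e:ℝ)| * M ≤ 2*δ₂ := by
    calc |(e:ℝ)| * M ≤ |(e:ℝ)| * (2*δ₂/|(e:ℝ)|) := mul_le_mul_of_nonneg_left hm2 (abs_nonneg _)
      _ = 2*δ₂ := by field_simp
  have hMd : |(d:ℝ)| * M ≤ 2*δ₁ := by
    calc |(d:ℝ)| * M ≤ |(d:ℝ)| * (2*δ₁/|(d:ℝ)|) := mul_le_mul_of_nonneg_left hm1 (abs_nonneg _)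
      _ = 2*δ₁ := by field_simp
  have hKG : (K.card : ℝ) ≤ (2*R + (G:ℝ))/(G:ℝ) := by
    rw [le_div_iff₀ hgR]
    have := mul_le_mul_of_nonneg_right hKcard hgR.le
    rwa [add_mul, one_mul, div_mul_cancel₀ _ hg0] at this
  have h5 : ((2*G+3 : ℕ) : ℝ) * M ≤ 5*(G:ℝ)*M := by
    apply mul_le_mul_of_nonneg_right _ hM0
    push_cast
    linarith
  have hstep : (K.card : ℝ) * (((2*G+3 : ℕ) : ℝ) * M) ≤ 10*R*M + 5*(G:ℝ)*M := by
    calc (K.card : ℝ) * (((2*G+3 : ℕ) : ℝ) * M)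
        ≤ ((2*R + (G:ℝ))/(G:ℝ)) * (5*(G:ℝ)*M) := by
          apply mul_le_mul hKG h5 (by positivity) (by positivity)
      _ = 5*(2*R + (G:ℝ))*M := by field_simp
      _ = 10*R*M + 5*(G:ℝ)*M := by ring
  have hA : 10*R*M ≤ 40*(δ₁*δ₂) := by
    have h1 : δ₁ * (|(e:ℝ)| * M) ≤ δ₁ * (2*δ₂) := mul_le_mul_of_nonneg_left hMe hδ₁0
    have h2 : δ₂ * (|(d:ℝ)| * M) ≤ δ₂ * (2*δ₁) := mul_le_mul_of_nonneg_left hMd hδ₂0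
    rw [hR]
    nlinarith [h1, h2]
  have hB : 5*(G:ℝ)*M ≤ 40*(δ₁*(G:ℝ)/|(d:ℝ)|) := by
    have h1 : (G:ℝ) * M ≤ (G:ℝ) * (2*δ₁/|(d:ℝ)|) := mul_le_mul_of_nonneg_left hm1 hgR.le
    have h2 : (0:ℝ) ≤ δ₁*(G:ℝ)/|(d:ℝ)| := by positivity
    have h3 : (G:ℝ)*(2*δ₁/|(d:ℝ)|) = 2*(δ₁*(G:ℝ)/|(d:ℝ)|) := by ring
    nlinarith [h1]
  calc (K.card : ℝ) * (((2*G+3 : ℕ) : ℝ) * M) ≤ 10*R*M + 5*(G:ℝ)*M := hstep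
    _ ≤ 40*(δ₁*δ₂) + 40*(δ₁*(G:ℝ)/|(d:ℝ)|) := add_le_add hA hB
    _ = 40 * (δ₁ * δ₂ + δ₁ * (G:ℝ) / |(d:ℝ)|) := by ring
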